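/- arXiv:2604.22734 — 2 statements merged into one kernel-verified Lean document; each statement's English description precedes it below -/
import Mathlib

section
/- Fix a spin weight s∈ℤ, an integer ℓ≥|s|, and σ∈ℂ. Let Ψ̂:(1,∞)→ℂ be twice differentiable and define Θ̂(ρ) = (ρ(ρ−1))^{−s/2} Ψ̂(ρ) (real positive power, since ρ(ρ−1)>0 for ρ>1). Then Ψ̂ satisfies the frequency-domain Bardeen–Press equation −∂_{ρ_*}²Ψ̂ + (2s(ρ−1/2)/ρ²)∂_{ρ_*}Ψ̂ + (2sσ(ρ−3/2)/ρ²)Ψ̂ + V(ρ)Ψ̂ + σ²Ψ̂ = 0 on (1,∞) if and only if Θ̂ satisfies the Schrödinger-form equation −∂_{ρ_*}²Θ̂ + (σ² + U(ρ))Θ̂ = 0 on (1,∞), where U(ρ) = 2sσ(ρ−3/2)/ρ² + (s²(ρ−1/2)² + s(ρ−1)²)/ρ⁴ + V(ρ). -/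
noncomputable section

/-- The Bardeen–Press potential
`V(ρ) = (1−1/ρ)[(s+1)/ρ³ + (ℓ−s)(ℓ+s+1)/ρ²]`. -/
def Vpot (s ℓ : ℤ) (ρ : ℝ) : ℂ :=
  (1 - 1/(ρ:ℂ)) * (((s:ℂ)+1)/(ρ:ℂ)^3 + ((ℓ:ℂ)-(s:ℂ))*((ℓ:ℂ)+(s:ℂ)+1)/(ρ:ℂ)^2)

/-- The tortoise-coordinate derivative `∂_{ρ_*} = ((ρ−1)/ρ)∂_ρ` acting on
functions of `ρ`. -/
def Dstar (F : ℝ → ℂ) (ρ : ℝ) : ℂ := (((ρ:ℂ) - 1)/(ρ:ℂ)) * deriv F ρ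

/-- The Schrödinger potential
`U(ρ) = 2sσ(ρ−3/2)/ρ² + (s²(ρ−1/2)² + s(ρ−1)²)/ρ⁴ + V(ρ)`. -/
def Upot (s ℓ : ℤ) (σ : ℂ) (ρ : ℝ) : ℂ :=
  2*(s:ℂ)*σ*((ρ:ℂ) - 3/2)/(ρ:ℂ)^2 +
    ((s:ℂ)^2*((ρ:ℂ) - 1/2)^2 + (s:ℂ)*((ρ:ℂ) - 1)^2)/(ρ:ℂ)^4 + Vpot s ℓ ρ

/-- The transformed field `Θ̂(ρ) = (ρ(ρ−1))^{−s/2} Ψ̂(ρ)` (real positive power). -/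
def Theta (s : ℤ) (Ψ : ℝ → ℂ) (ρ : ℝ) : ℂ :=
  (((ρ*(ρ-1)) ^ (-(s:ℝ)/2) : ℝ) : ℂ) * Ψ ρ

lemma hasDerivAt_W (s : ℤ) {ρ : ℝ} (hρ : 1 < ρ) :
    HasDerivAt (fun x : ℝ => ((x*(x-1)) ^ (-(s:ℝ)/2) : ℝ))
      ((2*ρ-1) * (-(s:ℝ)/2) * (ρ*(ρ-1)) ^ (-(s:ℝ)/2 - 1)) ρ := by
  have hc : ρ*(ρ-1) ≠ 0 := by nlinarith
  have h1 : HasDerivAt (fun x : ℝ => x*(x-1)) (2*ρ-1) ρ := by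
    have : HasDerivAt (fun x : ℝ => x*(x-1)) _ ρ := (hasDerivAt_id ρ).mul ((hasDerivAt_id ρ).sub_const 1)
    convert this using 1
    simp; ring
  exact h1.rpow_const (Or.inl hc)

lemma BP_step1 (s : ℤ) (Ψ : ℝ → ℂ)
    (hΨ1 : ∀ ρ ∈ Set.Ioi (1:ℝ), DifferentiableAt ℝ Ψ ρ) :
    ∀ x ∈ Set.Ioi (1:ℝ), Dstar (Theta s Ψ) x =
      (((x*(x-1)) ^ (-(s:ℝ)/2) : ℝ) : ℂ) *
        (((x:ℂ)-1)/(x:ℂ) * deriv Ψ x + -(s:ℂ)*((x:ℂ)-1/2)/(x:ℂ)^2 * Ψ x) := by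
  intro x hx
  have hx1 : (1:ℝ) < x := hx
  have hx0 : (x:ℂ) ≠ 0 := by
    exact_mod_cast ne_of_gt (lt_trans one_pos hx1)
  have hx1c : (x:ℂ) - 1 ≠ 0 := sub_ne_zero.2 (by exact_mod_cast ne_of_gt hx1)
  have hcpos : 0 < x*(x-1) := by nlinarith
  have hT : HasDerivAt (Theta s Ψ)
      (((2*x-1) * (-(s:ℝ)/2) * (x*(x-1)) ^ (-(s:ℝ)/2 - 1) : ℝ) * Ψ x
        + (((x*(x-1)) ^ (-(s:ℝ)/2) : ℝ) : ℂ) * deriv Ψ x) x :=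
    ((hasDerivAt_W s hx1).ofReal_comp).mul (hΨ1 x hx).hasDerivAt
  have hBA : ((((x*(x-1)) ^ (-(s:ℝ)/2) : ℝ)) : ℂ)
      = ((((x*(x-1)) ^ (-(s:ℝ)/2 - 1) : ℝ)) : ℂ) * ((x:ℂ)*((x:ℂ)-1)) := by
    have : (x*(x-1)) ^ (-(s:ℝ)/2) = (x*(x-1)) ^ (-(s:ℝ)/2 - 1) * (x*(x-1)) := by
      rw [← Real.rpow_add_one (ne_of_gt hcpos)]; ring_nf
    rw [this]; push_cast; ring
  rw [Dstar, hT.deriv, hBA]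
  push_cast
  field_simp
  ring

set_option maxHeartbeats 1600000 in
lemma BP_step2 (s ℓ : ℤ) (σ : ℂ) (Ψ : ℝ → ℂ)
    (hΨ1 : ∀ ρ ∈ Set.Ioi (1:ℝ), DifferentiableAt ℝ Ψ ρ)
    (hΨ2 : ∀ ρ ∈ Set.Ioi (1:ℝ), DifferentiableAt ℝ (deriv Ψ) ρ)
    (ρ : ℝ) (hρ : ρ ∈ Set.Ioi (1:ℝ)) :
    -(Dstar (Dstar (Theta s Ψ)) ρ) + (σ^2 + Upot s ℓ σ ρ) * Theta s Ψ ρ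
      = (((ρ*(ρ-1)) ^ (-(s:ℝ)/2) : ℝ) : ℂ) *
        (-(Dstar (Dstar Ψ) ρ) + (2*(s:ℂ)*((ρ:ℂ) - 1/2)/(ρ:ℂ)^2) * Dstar Ψ ρ +
          (2*(s:ℂ)*σ*((ρ:ℂ) - 3/2)/(ρ:ℂ)^2) * Ψ ρ + Vpot s ℓ ρ * Ψ ρ +
          σ^2 * Ψ ρ) := by
  have hx1 : (1:ℝ) < ρ := hρ
  have hx0 : (ρ:ℂ) ≠ 0 := by
    exact_mod_cast ne_of_gt (lt_trans one_pos hx1)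
  have hx1c : (ρ:ℂ) - 1 ≠ 0 := sub_ne_zero.2 (by exact_mod_cast ne_of_gt hx1)
  have hcpos : 0 < ρ*(ρ-1) := by nlinarith
  have hzc : HasDerivAt (fun x : ℝ => (x:ℂ)) 1 ρ := (hasDerivAt_id ρ).ofReal_comp
  have ha := (hzc.sub_const 1).div hzc hx0
  have hp := (hasDerivAt_pow 2 (ρ:ℂ)).comp_ofReal
  have hg := ((hzc.sub_const (1/2)).const_mul (-(s:ℂ))).div hp (pow_ne_zero 2 hx0)
  have hG := (ha.mul (hΨ2 ρ hρ).hasDerivAt).add (hg.mul (hΨ1 ρ hρ).hasDerivAt)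
  have hF := ((hasDerivAt_W s hx1).ofReal_comp).mul hG
  have hev : Dstar (Theta s Ψ) =ᶠ[nhds ρ]
      (fun x => (((x*(x-1)) ^ (-(s:ℝ)/2) : ℝ) : ℂ) *
        (((x:ℂ)-1)/(x:ℂ) * deriv Ψ x + -(s:ℂ)*((x:ℂ)-1/2)/(x:ℂ)^2 * Ψ x)) :=
    Filter.eventuallyEq_of_mem (Ioi_mem_nhds hx1) (BP_step1 s Ψ hΨ1)
  have hDΨ := ha.mul (hΨ2 ρ hρ).hasDerivAt
  have hDΨ' : deriv (Dstar Ψ) ρ = _ := hDΨ.deriv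
  have hBA : ((((ρ*(ρ-1)) ^ (-(s:ℝ)/2) : ℝ)) : ℂ)
      = ((((ρ*(ρ-1)) ^ (-(s:ℝ)/2 - 1) : ℝ)) : ℂ) * ((ρ:ℂ)*((ρ:ℂ)-1)) := by
    have : (ρ*(ρ-1)) ^ (-(s:ℝ)/2) = (ρ*(ρ-1)) ^ (-(s:ℝ)/2 - 1) * (ρ*(ρ-1)) := by
      rw [← Real.rpow_add_one (ne_of_gt hcpos)]; ring_nf
    rw [this]; push_cast; ring
  have hA : (((ρ:ℂ)-1)/(ρ:ℂ)) *
        (((2*ρ-1) * (-(s:ℝ)/2) * (ρ*(ρ-1)) ^ (-(s:ℝ)/2 - 1) : ℝ) : ℂ)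
      = (-(s:ℂ)*((ρ:ℂ)-1/2)/(ρ:ℂ)^2) * (((ρ*(ρ-1)) ^ (-(s:ℝ)/2) : ℝ) : ℂ) := by
    rw [hBA]; push_cast; field_simp
  have hcoef : σ^2 + Upot s ℓ σ ρ
      - (-(s:ℂ)*((ρ:ℂ)-1/2)/(ρ:ℂ)^2) * (-(s:ℂ)*((ρ:ℂ)-1/2)/(ρ:ℂ)^2)
      - (((ρ:ℂ)-1)/(ρ:ℂ)) *
          ((-(s:ℂ)*1*(ρ:ℂ)^2 - -(s:ℂ)*((ρ:ℂ)-1/2)*((2:ℂ)*(ρ:ℂ)^1))/((ρ:ℂ)^2)^2)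
      = 2*(s:ℂ)*σ*((ρ:ℂ)-3/2)/(ρ:ℂ)^2 + Vpot s ℓ ρ + σ^2 := by
    have key : ((s:ℂ)^2*((ρ:ℂ)-1/2)^2 + (s:ℂ)*((ρ:ℂ)-1)^2)/(ρ:ℂ)^4
        = (-(s:ℂ)*((ρ:ℂ)-1/2)/(ρ:ℂ)^2) * (-(s:ℂ)*((ρ:ℂ)-1/2)/(ρ:ℂ)^2)
          + (((ρ:ℂ)-1)/(ρ:ℂ)) *
            ((-(s:ℂ)*1*(ρ:ℂ)^2 - -(s:ℂ)*((ρ:ℂ)-1/2)*((2:ℂ)*(ρ:ℂ)^1))/((ρ:ℂ)^2)^2) := by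
      have hag : (((ρ:ℂ)-1)/(ρ:ℂ)) *
          ((-(s:ℂ)*1*(ρ:ℂ)^2 - -(s:ℂ)*((ρ:ℂ)-1/2)*((2:ℂ)*(ρ:ℂ)^1))/((ρ:ℂ)^2)^2)
          = (s:ℂ)*((ρ:ℂ)-1)^2/(ρ:ℂ)^4 := by
        rw [div_mul_div_comm,
          show ((ρ:ℂ)-1)*(-(s:ℂ)*1*(ρ:ℂ)^2 - -(s:ℂ)*((ρ:ℂ)-1/2)*((2:ℂ)*(ρ:ℂ)^1))
            = (ρ:ℂ)*((s:ℂ)*((ρ:ℂ)-1)^2) from by ring,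
          show (ρ:ℂ)*((ρ:ℂ)^2)^2 = (ρ:ℂ)*(ρ:ℂ)^4 from by ring]
        exact mul_div_mul_left _ _ hx0
      have hgg : (-(s:ℂ)*((ρ:ℂ)-1/2)/(ρ:ℂ)^2) * (-(s:ℂ)*((ρ:ℂ)-1/2)/(ρ:ℂ)^2)
          = (s:ℂ)^2*((ρ:ℂ)-1/2)^2/(ρ:ℂ)^4 := by
        rw [div_mul_div_comm]; congr 1 <;> ring
      rw [hag, hgg, ← add_div]
    rw [Upot]; linear_combination key
  conv_lhs => rw [Dstar, hev.deriv_eq, (show HasDerivAt (fun x : ℝ => (((x*(x-1)) ^ (-(s:ℝ)/2) : ℝ) : ℂ) *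
      (((x:ℂ)-1)/(x:ℂ) * deriv Ψ x + -(s:ℂ)*((x:ℂ)-1/2)/(x:ℂ)^2 * Ψ x)) _ ρ from hF).deriv]
  rw [Theta, Dstar, Dstar, hDΨ']
  simp only [Pi.mul_apply, Pi.add_apply, Pi.div_apply]
  linear_combination (-((((ρ:ℂ)-1)/(ρ:ℂ)) * deriv Ψ ρ
      + (-(s:ℂ)*((ρ:ℂ)-1/2)/(ρ:ℂ)^2) * Ψ ρ)) * hA
    + ((((ρ*(ρ-1)) ^ (-(s:ℝ)/2) : ℝ) : ℂ) * Ψ ρ) * hcoef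

/-- `Ψ̂` satisfies the frequency-domain Bardeen–Press equation on `(1,∞)` iff
`Θ̂ = (ρ(ρ−1))^{−s/2}Ψ̂` satisfies the Schrödinger-form equation
`−∂_{ρ_*}²Θ̂ + (σ² + U)Θ̂ = 0` there. -/
theorem bardeenPress_iff_schroedinger_form
    (s ℓ : ℤ) (hsl : |s| ≤ ℓ) (σ : ℂ) (Ψ : ℝ → ℂ)
    (hΨ1 : ∀ ρ ∈ Set.Ioi (1:ℝ), DifferentiableAt ℝ Ψ ρ)
    (hΨ2 : ∀ ρ ∈ Set.Ioi (1:ℝ), DifferentiableAt ℝ (deriv Ψ) ρ) :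
    (∀ ρ ∈ Set.Ioi (1:ℝ),
        -(Dstar (Dstar Ψ) ρ) + (2*(s:ℂ)*((ρ:ℂ) - 1/2)/(ρ:ℂ)^2) * Dstar Ψ ρ +
          (2*(s:ℂ)*σ*((ρ:ℂ) - 3/2)/(ρ:ℂ)^2) * Ψ ρ + Vpot s ℓ ρ * Ψ ρ +
          σ^2 * Ψ ρ = 0) ↔
      (∀ ρ ∈ Set.Ioi (1:ℝ),
        -(Dstar (Dstar (Theta s Ψ)) ρ) + (σ^2 + Upot s ℓ σ ρ) * Theta s Ψ ρ = 0) := by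
  constructor <;> intro h ρ hρ
  · rw [BP_step2 s ℓ σ Ψ hΨ1 hΨ2 ρ hρ, h ρ hρ, mul_zero]
  · have h0 := h ρ hρ
    rw [BP_step2 s ℓ σ Ψ hΨ1 hΨ2 ρ hρ] at h0
    have hx1 : (1:ℝ) < ρ := hρ
    have hcpos : 0 < ρ*(ρ-1) := by nlinarith
    have hwne : ((((ρ*(ρ-1)) ^ (-(s:ℝ)/2) : ℝ)) : ℂ) ≠ 0 :=
      Complex.ofReal_ne_zero.2 (ne_of_gt (Real.rpow_pos_of_pos hcpos _))
    exact (mul_eq_zero.1 h0).resolve_left hwne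
end
end

section
/- Fix a spin weight s∈ℤ and an integer ℓ≥|s|. Define a real sequence (aₙ) by a₀=1 and a_{n+1} = ((ℓ+n+1)(ℓ+n+s+1) / ((n+1)(2ℓ+n+2))) aₙ for n≥0. Then: (i) the power series Σ_{n≥0} aₙ xⁿ has radius of convergence 1, so that f(ρ) = Σ_{n=0}^{∞} aₙ ρ^{−(ℓ−s)−n} converges for every real ρ>1; and (ii) f is twice differentiable on (1,∞) and satisfies the σ=0 confluent (hypergeometric-type) equation f''(ρ) + [−(3s+1)/ρ + (1+s)/(ρ−1)] f'(ρ) + [(s+1)(2s+1)/ρ² − ((s+1)²+ℓ(ℓ+1))/(ρ(ρ−1))] f(ρ) = 0 on (1,∞). -/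
noncomputable section

open Filter Topology

private lemma tendsto_frac (c d : ℝ) :
    Tendsto (fun n : ℕ => ((n:ℝ) + c) / ((n:ℝ) + d)) atTop (𝓝 1) := by
  have hd : Tendsto (fun n : ℕ => (n:ℝ) + d) atTop atTop :=
    tendsto_atTop_add_const_right _ d tendsto_natCast_atTop_atTop
  have h0 : Tendsto (fun n : ℕ => (c - d) / ((n:ℝ) + d)) atTop (𝓝 0) :=
    Tendsto.div_atTop tendsto_const_nhds hd
  have h1 : Tendsto (fun n : ℕ => 1 + (c - d) / ((n:ℝ) + d)) atTop (𝓝 1) := by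
    simpa using tendsto_const_nhds.add h0
  refine h1.congr' ?_
  filter_upwards [hd.eventually_gt_atTop 0] with n hn
  have hne : (n:ℝ) + d ≠ 0 := ne_of_gt hn
  field_simp
  ring

private lemma zpow_anti' {r x : ℝ} (hr : 0 < r) (hrx : r ≤ x) {m : ℤ} (hm : m ≤ 0) :
    x ^ m ≤ r ^ m := by
  have hx : 0 < x := lt_of_lt_of_le hr hrx
  lift -m to ℕ using (by omega : (0:ℤ) ≤ -m) with k hk
  have hm' : m = -(k:ℤ) := by omega
  rw [hm', zpow_neg, zpow_neg, zpow_natCast, zpow_natCast]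
  exact inv_anti₀ (pow_pos hr k) (pow_le_pow_left₀ hr.le hrx k)

section main
variable {s ℓ : ℤ} {a : ℕ → ℝ}

/-- the ratio in the recursion -/
private def R (s ℓ : ℤ) (n : ℕ) : ℝ :=
  (((ℓ:ℝ)+(n:ℝ)+1)*((ℓ:ℝ)+(n:ℝ)+(s:ℝ)+1)) / (((n:ℝ)+1)*(2*(ℓ:ℝ)+(n:ℝ)+2))

private lemma Rpos (hsl : |s| ≤ ℓ) (n : ℕ) : 0 < R s ℓ n := by
  have h1 : (s:ℝ) ≤ (ℓ:ℝ) := by exact_mod_cast (le_trans (le_abs_self s) hsl)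
  have h2 : -(ℓ:ℝ) ≤ (s:ℝ) := by exact_mod_cast (abs_le.mp hsl).1
  have h3 : (0:ℝ) ≤ (ℓ:ℝ) := by exact_mod_cast (abs_nonneg s).trans hsl
  have hn : (0:ℝ) ≤ (n:ℝ) := Nat.cast_nonneg n
  apply div_pos
  · apply mul_pos <;> nlinarith
  · apply mul_pos <;> nlinarith

private lemma Rtendsto (hsl : |s| ≤ ℓ) :
    Tendsto (fun n : ℕ => R s ℓ n) atTop (𝓝 1) := by
  have h := (tendsto_frac ((ℓ:ℝ)+1) 1).mul (tendsto_frac ((ℓ:ℝ)+(s:ℝ)+1) (2*(ℓ:ℝ)+2))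
  rw [mul_one] at h
  refine h.congr fun n => ?_
  rw [div_mul_div_comm]
  unfold R
  congr 1 <;> ring

private lemma apos (hsl : |s| ≤ ℓ) (ha0 : a 0 = 1)
    (harec : ∀ n : ℕ, a (n+1) = R s ℓ n * a n) : ∀ n, 0 < a n := by
  intro n
  induction n with
  | zero => rw [ha0]; norm_num
  | succ k ih => rw [harec k]; exact mul_pos (Rpos hsl k) ih

/-- Master summability lemma. -/
private lemma master (hsl : |s| ≤ ℓ) (ha0 : a 0 = 1)
    (harec : ∀ n : ℕ, a (n+1) = R s ℓ n * a n)
    (c d : ℝ) {r : ℝ} (hr : 1 < r) (k : ℤ) :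
    Summable (fun n : ℕ => ((n:ℝ)+c)*((n:ℝ)+d) * a n * r ^ (-(ℓ-s) - (n:ℤ) + k)) := by
  have hr0 : (0:ℝ) < r := by linarith
  have hrne : r ≠ 0 := ne_of_gt hr0
  have hap := apos hsl ha0 harec
  set f : ℕ → ℝ := fun n => ((n:ℝ)+c)*((n:ℝ)+d) * a n * r ^ (-(ℓ-s) - (n:ℤ) + k) with hf
  -- eventual positivity of factors
  have hev : ∀ᶠ n : ℕ in atTop, 0 < (n:ℝ)+c ∧ 0 < (n:ℝ)+d := by
    filter_upwards [eventually_ge_atTop (⌈|c|⌉₊ + ⌈|d|⌉₊ + 1)] with n hn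
    have h1 : |c| ≤ (⌈|c|⌉₊:ℝ) := Nat.le_ceil _
    have h2 : |d| ≤ (⌈|d|⌉₊:ℝ) := Nat.le_ceil _
    have hn' : ((⌈|c|⌉₊ + ⌈|d|⌉₊ + 1 : ℕ):ℝ) ≤ (n:ℝ) := by exact_mod_cast hn
    push_cast at hn'
    constructor <;> nlinarith [neg_abs_le c, neg_abs_le d, abs_nonneg c, abs_nonneg d]
  have hfpos : ∀ᶠ n : ℕ in atTop, 0 < f n := by
    filter_upwards [hev] with n hn
    exact mul_pos (mul_pos (mul_pos hn.1 hn.2) (hap n)) (zpow_pos hr0 _)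
  have hfne : ∀ᶠ n : ℕ in atTop, f n ≠ 0 := hfpos.mono fun n h => ne_of_gt h
  -- ratio tendsto
  have htend : Tendsto (fun n : ℕ => ‖f (n+1)‖ / ‖f n‖) atTop (𝓝 r⁻¹) := by
    have h := ((((tendsto_frac (c+1) c).mul (tendsto_frac (d+1) d)).mul
      (Rtendsto hsl)).mul_const r⁻¹)
    rw [mul_one, one_mul, one_mul] at h
    refine h.congr' ?_
    filter_upwards [hev, hfpos] with n hn hfn
    have hfn1 : 0 < f (n+1) := by
      have h1 : 0 < (n:ℝ)+1+c := by linarith [hn.1, (Nat.cast_nonneg n : (0:ℝ) ≤ n)]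
      have h2 : 0 < (n:ℝ)+1+d := by linarith [hn.2]
      have : (((n+1:ℕ)):ℝ) = (n:ℝ)+1 := by push_cast; ring
      show 0 < ((((n+1:ℕ)):ℝ)+c)*((((n+1:ℕ)):ℝ)+d) * a (n+1) * _
      rw [this]
      exact mul_pos (mul_pos (mul_pos h1 h2) (hap (n+1))) (zpow_pos hr0 _)
    rw [Real.norm_eq_abs, Real.norm_eq_abs, abs_of_pos hfn1, abs_of_pos hfn]
    -- f (n+1) = stuff * f n
    have hzp : r ^ (-(ℓ-s) - ((n+1:ℕ):ℤ) + k) = r ^ (-(ℓ-s) - (n:ℤ) + k) * r⁻¹ := by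
      have : -(ℓ-s) - ((n+1:ℕ):ℤ) + k = (-(ℓ-s) - (n:ℤ) + k) + (-1) := by push_cast; ring
      rw [this, zpow_add₀ hrne, zpow_neg_one]
    have key : f (n+1) = (((n:ℝ)+(c+1))/((n:ℝ)+c) * (((n:ℝ)+(d+1))/((n:ℝ)+d)) * R s ℓ n * r⁻¹) * f n := by
      show ((((n+1:ℕ)):ℝ)+c)*((((n+1:ℕ)):ℝ)+d) * a (n+1) * r ^ (-(ℓ-s) - ((n+1:ℕ):ℤ) + k) = _
      rw [hzp, harec n]
      have hc' : (n:ℝ)+c ≠ 0 := ne_of_gt hn.1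
      have hd' : (n:ℝ)+d ≠ 0 := ne_of_gt hn.2
      push_cast
      field_simp
      ring
    rw [key, mul_div_assoc, div_self (ne_of_gt hfn), mul_one]
  exact summable_of_ratio_test_tendsto_lt_one (by rw [inv_lt_one_iff₀]; right; exact hr) hfne htend

end main

section main2
variable {s ℓ : ℤ} {a : ℕ → ℝ}

private lemma lssl (hsl : |s| ≤ ℓ) : (s:ℝ) ≤ (ℓ:ℝ) ∧ -(ℓ:ℝ) ≤ (s:ℝ) := by
  constructor
  · exact_mod_cast (abs_le.mp hsl).2
  · exact_mod_cast (abs_le.mp hsl).1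

/-- flexible comparison lemma -/
private lemma sum_bound (hsl : |s| ≤ ℓ) (ha0 : a 0 = 1)
    (harec : ∀ n : ℕ, a (n+1) = R s ℓ n * a n)
    {r : ℝ} (hr : 1 < r) (c d : ℝ) (k : ℤ) (g : ℕ → ℝ)
    (hg : ∀ n, ‖g n‖ ≤ ((n:ℝ)+c)*((n:ℝ)+d) * a n * r ^ (-(ℓ-s) - (n:ℤ) + k)) :
    Summable g :=
  Summable.of_norm_bounded (master hsl ha0 harec c d hr k) hg

private lemma sum_plain (hsl : |s| ≤ ℓ) (ha0 : a 0 = 1)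
    (harec : ∀ n : ℕ, a (n+1) = R s ℓ n * a n)
    {r : ℝ} (hr : 1 < r) :
    Summable (fun n : ℕ => a n * r ^ (-(ℓ-s) - (n:ℤ))) := by
  have hap := apos hsl ha0 harec
  have hr0 : (0:ℝ) < r := by linarith
  refine sum_bound hsl ha0 harec hr 1 1 0 _ (fun n => ?_)
  have hz : (0:ℝ) < r ^ (-(ℓ-s) - (n:ℤ)) := zpow_pos hr0 _
  rw [add_zero, Real.norm_eq_abs, abs_of_pos (mul_pos (hap n) hz)]
  have hkey : (1:ℝ) ≤ ((n:ℝ)+1)*((n:ℝ)+1) := by nlinarith [Nat.cast_nonneg (α := ℝ) n]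
  have := mul_le_mul_of_nonneg_right hkey (le_of_lt (mul_pos (hap n) hz))
  nlinarith [this]

private lemma sum_d1 (hsl : |s| ≤ ℓ) (ha0 : a 0 = 1)
    (harec : ∀ n : ℕ, a (n+1) = R s ℓ n * a n)
    {r : ℝ} (hr : 1 < r) :
    Summable (fun n : ℕ => a n * (((-(ℓ-s) - (n:ℤ) : ℤ):ℝ) * r ^ (-(ℓ-s) - (n:ℤ) - 1))) := by
  have hap := apos hsl ha0 harec
  have hr0 : (0:ℝ) < r := by linarith
  obtain ⟨h1, h2⟩ := lssl hsl
  refine sum_bound hsl ha0 harec hr ((ℓ:ℝ)-(s:ℝ)) 1 (-1) _ (fun n => ?_)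
  have hz : (0:ℝ) < r ^ (-(ℓ-s) - (n:ℤ) - 1) := zpow_pos hr0 _
  have hk : -(ℓ-s) - (n:ℤ) + (-1) = -(ℓ-s) - (n:ℤ) - 1 := by ring
  rw [hk, Real.norm_eq_abs, abs_mul, abs_mul, abs_of_pos (hap n), abs_of_pos hz]
  have habs : |((-(ℓ-s) - (n:ℤ) : ℤ):ℝ)| = (n:ℝ) + ((ℓ:ℝ)-(s:ℝ)) := by
    push_cast
    rw [abs_of_nonpos (by linarith [Nat.cast_nonneg (α := ℝ) n])]
    ring
  rw [habs]
  have hM : (0:ℝ) ≤ (n:ℝ) + ((ℓ:ℝ)-(s:ℝ)) := by linarith [Nat.cast_nonneg (α := ℝ) n]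
  have hkey : (n:ℝ)+((ℓ:ℝ)-(s:ℝ)) ≤ ((n:ℝ)+((ℓ:ℝ)-(s:ℝ)))*((n:ℝ)+1) := by
    nlinarith [Nat.cast_nonneg (α := ℝ) n]
  have := mul_le_mul_of_nonneg_right hkey (le_of_lt (mul_pos (hap n) hz))
  nlinarith [this]

private lemma sum_d2 (hsl : |s| ≤ ℓ) (ha0 : a 0 = 1)
    (harec : ∀ n : ℕ, a (n+1) = R s ℓ n * a n)
    {r : ℝ} (hr : 1 < r) :
    Summable (fun n : ℕ => (a n * ((-(ℓ-s) - (n:ℤ) : ℤ):ℝ)) *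
      (((-(ℓ-s) - (n:ℤ) - 1 : ℤ):ℝ) * r ^ (-(ℓ-s) - (n:ℤ) - 2))) := by
  have hap := apos hsl ha0 harec
  have hr0 : (0:ℝ) < r := by linarith
  obtain ⟨h1, h2⟩ := lssl hsl
  refine sum_bound hsl ha0 harec hr ((ℓ:ℝ)-(s:ℝ)) ((ℓ:ℝ)-(s:ℝ)+1) (-2) _ (fun n => ?_)
  have hz : (0:ℝ) < r ^ (-(ℓ-s) - (n:ℤ) - 2) := zpow_pos hr0 _
  have hk : -(ℓ-s) - (n:ℤ) + (-2) = -(ℓ-s) - (n:ℤ) - 2 := by ring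
  rw [hk, Real.norm_eq_abs, abs_mul, abs_mul, abs_mul, abs_of_pos (hap n), abs_of_pos hz]
  have habs : |((-(ℓ-s) - (n:ℤ) : ℤ):ℝ)| = (n:ℝ) + ((ℓ:ℝ)-(s:ℝ)) := by
    push_cast
    rw [abs_of_nonpos (by linarith [Nat.cast_nonneg (α := ℝ) n])]
    ring
  have habs2 : |((-(ℓ-s) - (n:ℤ) - 1 : ℤ):ℝ)| = (n:ℝ) + ((ℓ:ℝ)-(s:ℝ)+1) := by
    push_cast
    rw [abs_of_nonpos (by linarith [Nat.cast_nonneg (α := ℝ) n])]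
    ring
  rw [habs, habs2]
  exact le_of_eq (by ring)

end main2

/-- The Frobenius-type solution at infinity of the `σ = 0` confluent Heun
normal form: `f(ρ) = Σ_{n=0}^∞ aₙ ρ^{−(ℓ−s)−n}`. -/
def frobeniusSol (s ℓ : ℤ) (a : ℕ → ℝ) (ρ : ℝ) : ℝ :=
  ∑' n : ℕ, a n * ρ ^ (-(ℓ - s) - (n:ℤ))

section main3
variable {s ℓ : ℤ} {a : ℕ → ℝ}

private lemma hasDeriv_one (hsl : |s| ≤ ℓ) (ha0 : a 0 = 1)
    (harec : ∀ n : ℕ, a (n+1) = R s ℓ n * a n)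
    {ρ : ℝ} (hρ : 1 < ρ) :
    HasDerivAt (frobeniusSol s ℓ a)
      (∑' n : ℕ, a n * (((-(ℓ-s) - (n:ℤ) : ℤ):ℝ) * ρ ^ (-(ℓ-s) - (n:ℤ) - 1))) ρ := by
  obtain ⟨h1, h2⟩ := lssl hsl
  have hap := apos hsl ha0 harec
  set r : ℝ := (1+ρ)/2 with hrdef
  have hr1 : 1 < r := by rw [hrdef]; linarith
  have hr0 : (0:ℝ) < r := by linarith
  have hrρ : r < ρ := by rw [hrdef]; linarith
  have hmem : ρ ∈ Set.Ioi r := hrρ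
  unfold frobeniusSol
  refine hasDerivAt_tsum_of_isPreconnected
    (u := fun n : ℕ => ((n:ℝ)+((ℓ:ℝ)-(s:ℝ)))*((n:ℝ)+1) * a n * r ^ (-(ℓ-s) - (n:ℤ) + (-1)))
    (master hsl ha0 harec _ _ hr1 _) isOpen_Ioi isPreconnected_Ioi
    (g' := fun n y => a n * (((-(ℓ-s) - (n:ℤ) : ℤ):ℝ) * y ^ (-(ℓ-s) - (n:ℤ) - 1)))
    (fun n y hy => ?_) (fun n y hy => ?_) hmem (sum_plain hsl ha0 harec hρ) hmem
  · have hy0 : y ≠ 0 := ne_of_gt (lt_trans hr0 hy)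
    exact (hasDerivAt_zpow _ y (Or.inl hy0)).const_mul (a n)
  · have hy0 : (0:ℝ) < y := lt_trans hr0 hy
    have hzy : (0:ℝ) < y ^ (-(ℓ-s) - (n:ℤ) - 1) := zpow_pos hy0 _
    have hzr : y ^ (-(ℓ-s) - (n:ℤ) - 1) ≤ r ^ (-(ℓ-s) - (n:ℤ) - 1) := by
      apply zpow_anti' hr0 (le_of_lt hy)
      have := le_trans (le_abs_self s) hsl
      omega
    have habs : |((-(ℓ-s) - (n:ℤ) : ℤ):ℝ)| = (n:ℝ) + ((ℓ:ℝ)-(s:ℝ)) := by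
      push_cast
      rw [abs_of_nonpos (by linarith [Nat.cast_nonneg (α := ℝ) n])]
      ring
    have hk : -(ℓ-s) - (n:ℤ) + (-1) = -(ℓ-s) - (n:ℤ) - 1 := by ring
    simp only [hk, Real.norm_eq_abs, abs_mul]
    rw [abs_of_pos (hap n), abs_of_pos hzy, habs]
    have hM : (0:ℝ) ≤ (n:ℝ) + ((ℓ:ℝ)-(s:ℝ)) := by linarith [Nat.cast_nonneg (α := ℝ) n]
    have hzrpos : (0:ℝ) < r ^ (-(ℓ-s) - (n:ℤ) - 1) := zpow_pos hr0 _
    have hb1 := mul_le_mul_of_nonneg_left hzr (mul_nonneg hM (hap n).le)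
    have hstep2 : ((n:ℝ)+((ℓ:ℝ)-(s:ℝ))) ≤ ((n:ℝ)+((ℓ:ℝ)-(s:ℝ)))*((n:ℝ)+1) := by
      nlinarith [Nat.cast_nonneg (α := ℝ) n]
    have hb2 := mul_le_mul_of_nonneg_right hstep2 (le_of_lt (mul_pos (hap n) hzrpos))
    nlinarith [hb1, hb2]

private lemma hasDeriv_two (hsl : |s| ≤ ℓ) (ha0 : a 0 = 1)
    (harec : ∀ n : ℕ, a (n+1) = R s ℓ n * a n)
    {ρ : ℝ} (hρ : 1 < ρ) :
    HasDerivAt (fun z => ∑' n : ℕ, a n * (((-(ℓ-s) - (n:ℤ) : ℤ):ℝ) * z ^ (-(ℓ-s) - (n:ℤ) - 1)))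
      (∑' n : ℕ, (a n * ((-(ℓ-s) - (n:ℤ) : ℤ):ℝ)) *
        (((-(ℓ-s) - (n:ℤ) - 1 : ℤ):ℝ) * ρ ^ (-(ℓ-s) - (n:ℤ) - 2))) ρ := by
  obtain ⟨h1, h2⟩ := lssl hsl
  have hap := apos hsl ha0 harec
  set r : ℝ := (1+ρ)/2 with hrdef
  have hr1 : 1 < r := by rw [hrdef]; linarith
  have hr0 : (0:ℝ) < r := by linarith
  have hrρ : r < ρ := by rw [hrdef]; linarith
  have hmem : ρ ∈ Set.Ioi r := hrρ
  refine hasDerivAt_tsum_of_isPreconnected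
    (u := fun n : ℕ => ((n:ℝ)+((ℓ:ℝ)-(s:ℝ)))*((n:ℝ)+((ℓ:ℝ)-(s:ℝ)+1)) * a n *
      r ^ (-(ℓ-s) - (n:ℤ) + (-2)))
    (master hsl ha0 harec _ _ hr1 _) isOpen_Ioi isPreconnected_Ioi
    (g' := fun n y => (a n * ((-(ℓ-s) - (n:ℤ) : ℤ):ℝ)) *
      (((-(ℓ-s) - (n:ℤ) - 1 : ℤ):ℝ) * y ^ (-(ℓ-s) - (n:ℤ) - 2)))
    (fun n y hy => ?_) (fun n y hy => ?_) hmem (sum_d1 hsl ha0 harec hρ) hmem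
  · have hy0 : y ≠ 0 := ne_of_gt (lt_trans hr0 hy)
    have h := (hasDerivAt_zpow (-(ℓ-s) - (n:ℤ) - 1) y
      (Or.inl hy0)).const_mul (a n * ((-(ℓ-s) - (n:ℤ) : ℤ):ℝ))
    have he : -(ℓ-s) - (n:ℤ) - 1 - 1 = -(ℓ-s) - (n:ℤ) - 2 := by ring
    rw [he] at h
    exact h.congr_of_eventuallyEq (Filter.Eventually.of_forall fun z => (mul_assoc _ _ _).symm)
  · have hy0 : (0:ℝ) < y := lt_trans hr0 hy
    have hzy : (0:ℝ) < y ^ (-(ℓ-s) - (n:ℤ) - 2) := zpow_pos hy0 _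
    have hzr : y ^ (-(ℓ-s) - (n:ℤ) - 2) ≤ r ^ (-(ℓ-s) - (n:ℤ) - 2) := by
      apply zpow_anti' hr0 (le_of_lt hy)
      have := le_trans (le_abs_self s) hsl
      omega
    have habs : |((-(ℓ-s) - (n:ℤ) : ℤ):ℝ)| = (n:ℝ) + ((ℓ:ℝ)-(s:ℝ)) := by
      push_cast
      rw [abs_of_nonpos (by linarith [Nat.cast_nonneg (α := ℝ) n])]
      ring
    have habs2 : |((-(ℓ-s) - (n:ℤ) - 1 : ℤ):ℝ)| = (n:ℝ) + ((ℓ:ℝ)-(s:ℝ)+1) := by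
      push_cast
      rw [abs_of_nonpos (by linarith [Nat.cast_nonneg (α := ℝ) n])]
      ring
    have hk : -(ℓ-s) - (n:ℤ) + (-2) = -(ℓ-s) - (n:ℤ) - 2 := by ring
    simp only [hk, Real.norm_eq_abs, abs_mul]
    rw [abs_of_pos (hap n), abs_of_pos hzy, habs, habs2]
    have hM : (0:ℝ) ≤ (n:ℝ) + ((ℓ:ℝ)-(s:ℝ)) := by linarith [Nat.cast_nonneg (α := ℝ) n]
    have hM2 : (0:ℝ) ≤ (n:ℝ) + ((ℓ:ℝ)-(s:ℝ)+1) := by linarith [Nat.cast_nonneg (α := ℝ) n]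
    have hb := mul_le_mul_of_nonneg_left hzr
      (mul_nonneg (mul_nonneg hM hM2) (hap n).le)
    nlinarith [hb]

end main3

section main4
variable {s ℓ : ℤ} {a : ℕ → ℝ}

private lemma ode_holds (hsl : |s| ≤ ℓ) (ha0 : a 0 = 1)
    (harec : ∀ n : ℕ, a (n+1) = R s ℓ n * a n)
    {ρ : ℝ} (hρ : 1 < ρ) :
    (∑' n : ℕ, (a n * ((-(ℓ-s) - (n:ℤ) : ℤ):ℝ)) *
        (((-(ℓ-s) - (n:ℤ) - 1 : ℤ):ℝ) * ρ ^ (-(ℓ-s) - (n:ℤ) - 2))) +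
      (-(3*(s:ℝ)+1)/ρ + (1+(s:ℝ))/(ρ-1)) *
        (∑' n : ℕ, a n * (((-(ℓ-s) - (n:ℤ) : ℤ):ℝ) * ρ ^ (-(ℓ-s) - (n:ℤ) - 1))) +
      (((s:ℝ)+1)*(2*(s:ℝ)+1)/ρ^2 -
        (((s:ℝ)+1)^2 + (ℓ:ℝ)*((ℓ:ℝ)+1))/(ρ*(ρ-1))) *
        (∑' n : ℕ, a n * ρ ^ (-(ℓ-s) - (n:ℤ))) = 0 := by
  obtain ⟨h1, h2⟩ := lssl hsl
  have hap := apos hsl ha0 harec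
  have hρ0 : (0:ℝ) < ρ := by linarith
  have hρne : ρ ≠ 0 := ne_of_gt hρ0
  have hρ1 : ρ - 1 ≠ 0 := by intro h; rw [sub_eq_zero] at h; exact (ne_of_gt hρ) h
  have hL0 : (0:ℝ) ≤ (ℓ:ℝ) := by linarith
  set c1 : ℝ := -(3*(s:ℝ)+1)/ρ + (1+(s:ℝ))/(ρ-1) with hc1
  set c0 : ℝ := ((s:ℝ)+1)*(2*(s:ℝ)+1)/ρ^2 -
    (((s:ℝ)+1)^2 + (ℓ:ℝ)*((ℓ:ℝ)+1))/(ρ*(ρ-1)) with hc0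
  set u : ℕ → ℝ := fun n => ((n:ℝ)+0)*((n:ℝ)+(2*(ℓ:ℝ)+1)) * a n * ρ ^ (-(ℓ-s) - (n:ℤ) + 1)
    with hu_def
  set v : ℕ → ℝ := fun n =>
    -(((n:ℝ)+((ℓ:ℝ)+1))*((n:ℝ)+((ℓ:ℝ)+(s:ℝ)+1)) * a n * ρ ^ (-(ℓ-s) - (n:ℤ) + 0)) with hv_def
  have hu : Summable u := master hsl ha0 harec 0 (2*(ℓ:ℝ)+1) hρ 1
  have hv : Summable v := (master hsl ha0 harec ((ℓ:ℝ)+1) ((ℓ:ℝ)+(s:ℝ)+1) hρ 0).neg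
  -- termwise identity
  have hterm : ∀ n : ℕ,
      (a n * ((-(ℓ-s) - (n:ℤ) : ℤ):ℝ)) *
        (((-(ℓ-s) - (n:ℤ) - 1 : ℤ):ℝ) * ρ ^ (-(ℓ-s) - (n:ℤ) - 2)) +
      c1 * (a n * (((-(ℓ-s) - (n:ℤ) : ℤ):ℝ) * ρ ^ (-(ℓ-s) - (n:ℤ) - 1))) +
      c0 * (a n * ρ ^ (-(ℓ-s) - (n:ℤ))) = (ρ^2*(ρ-1))⁻¹ * (u n + v n) := by
    intro n
    have hz1 : ρ ^ (-(ℓ-s) - (n:ℤ) - 1) = ρ ^ (-(ℓ-s) - (n:ℤ)) * ρ⁻¹ :=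
      zpow_sub_one₀ hρne _
    have hz2 : ρ ^ (-(ℓ-s) - (n:ℤ) - 2) = ρ ^ (-(ℓ-s) - (n:ℤ)) * ρ⁻¹ * ρ⁻¹ := by
      have h : -(ℓ-s) - (n:ℤ) - 2 = (-(ℓ-s) - (n:ℤ) - 1) - 1 := by ring
      rw [h, zpow_sub_one₀ hρne, hz1]
    have hz3 : ρ ^ (-(ℓ-s) - (n:ℤ) + 1) = ρ ^ (-(ℓ-s) - (n:ℤ)) * ρ :=
      zpow_add_one₀ hρne _
    have hz4 : ρ ^ (-(ℓ-s) - (n:ℤ) + 0) = ρ ^ (-(ℓ-s) - (n:ℤ)) := by rw [add_zero]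
    have hcast : ((-(ℓ-s) - (n:ℤ) : ℤ):ℝ) = (s:ℝ) - (ℓ:ℝ) - (n:ℝ) := by push_cast; ring
    have hcast2 : ((-(ℓ-s) - (n:ℤ) - 1 : ℤ):ℝ) = (s:ℝ) - (ℓ:ℝ) - (n:ℝ) - 1 := by
      push_cast; ring
    rw [hu_def, hv_def]
    simp only []
    rw [hz1, hz2, hz3, hz4, hcast, hcast2, hc1, hc0]
    field_simp
    ring
  -- shift identity
  have hshift : ∀ n : ℕ, u (n+1) = - v n := by
    intro n
    have hE : -(ℓ-s) - ((n+1:ℕ):ℤ) + 1 = -(ℓ-s) - (n:ℤ) + 0 := by push_cast; ring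
    show ((((n+1:ℕ)):ℝ)+0)*((((n+1:ℕ)):ℝ)+(2*(ℓ:ℝ)+1)) * a (n+1) *
      ρ ^ (-(ℓ-s) - ((n+1:ℕ):ℤ) + 1) = _
    rw [hE, harec n]
    unfold R
    have hd1 : ((n:ℝ)+1) ≠ 0 := by positivity
    have hd2 : (2*(ℓ:ℝ)+(n:ℝ)+2) ≠ 0 := by
      have : (0:ℝ) ≤ (n:ℝ) := Nat.cast_nonneg n
      intro h; nlinarith
    rw [hv_def]
    simp only []
    push_cast
    field_simp
    ring
  have hu0 : u 0 = 0 := by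
    rw [hu_def]; norm_num
  -- main computation
  rw [← tsum_mul_left (a := c1), ← tsum_mul_left (a := c0),
    ← Summable.tsum_add (sum_d2 hsl ha0 harec hρ) ((sum_d1 hsl ha0 harec hρ).mul_left c1),
    ← Summable.tsum_add ((sum_d2 hsl ha0 harec hρ).add ((sum_d1 hsl ha0 harec hρ).mul_left c1))
      ((sum_plain hsl ha0 harec hρ).mul_left c0)]
  rw [tsum_congr (fun n => hterm n), tsum_mul_left]
  rw [Summable.tsum_add hu hv, Summable.tsum_eq_zero_add hu, hu0, zero_add]
  rw [tsum_congr (fun n => hshift n), tsum_neg]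
  ring

end main4

section parts12
variable {s ℓ : ℤ} {a : ℕ → ℝ}

private lemma ratio_x (hsl : |s| ≤ ℓ) (ha0 : a 0 = 1)
    (harec : ∀ n : ℕ, a (n+1) = R s ℓ n * a n)
    {x : ℝ} (hx : x ≠ 0) :
    Filter.Tendsto (fun n : ℕ => ‖a (n+1) * x ^ (n+1)‖ / ‖a n * x ^ n‖)
      Filter.atTop (𝓝 |x|) := by
  have hap := apos hsl ha0 harec
  have h := (Rtendsto hsl).mul_const |x|
  rw [one_mul] at h
  refine h.congr fun n => ?_
  rw [harec n, pow_succ]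
  rw [Real.norm_eq_abs, Real.norm_eq_abs, abs_mul, abs_mul, abs_mul, abs_mul,
    abs_of_pos (Rpos hsl n), abs_of_pos (hap n)]
  have hxne : |x| ≠ 0 := abs_ne_zero.mpr hx
  have hane : a n ≠ 0 := ne_of_gt (hap n)
  field_simp

private lemma part1 (hsl : |s| ≤ ℓ) (ha0 : a 0 = 1)
    (harec : ∀ n : ℕ, a (n+1) = R s ℓ n * a n)
    {x : ℝ} (hx : |x| < 1) : Summable (fun n : ℕ => a n * x ^ n) := by
  rcases eq_or_ne x 0 with rfl | hx0
  · apply summable_of_ne_finset_zero (s := {0})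
    intro n hn
    have : n ≠ 0 := by simpa using hn
    simp [zero_pow this]
  · have hap := apos hsl ha0 harec
    refine summable_of_ratio_test_tendsto_lt_one hx
      (Filter.Eventually.of_forall fun n =>
        mul_ne_zero (ne_of_gt (hap n)) (pow_ne_zero _ hx0))
      (ratio_x hsl ha0 harec hx0)

private lemma part2 (hsl : |s| ≤ ℓ) (ha0 : a 0 = 1)
    (harec : ∀ n : ℕ, a (n+1) = R s ℓ n * a n)
    {x : ℝ} (hx : 1 < |x|) : ¬ Summable (fun n : ℕ => a n * x ^ n) := by
  have hx0 : x ≠ 0 := by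
    intro h; rw [h] at hx; simp at hx; linarith
  exact not_summable_of_ratio_test_tendsto_gt_one hx (ratio_x hsl ha0 harec hx0)

end parts12

/-- (i) The power series `Σ aₙxⁿ` built from the recursion
`a₀ = 1`, `a_{n+1} = ((ℓ+n+1)(ℓ+n+s+1)/((n+1)(2ℓ+n+2)))aₙ` has radius of
convergence `1` (it converges for `|x| < 1` and diverges for `|x| > 1`), so
`f(ρ) = Σ aₙ ρ^{−(ℓ−s)−n}` converges for every `ρ > 1`; and (ii) `f` is twice
differentiable on `(1,∞)` and satisfies the `σ = 0` confluent
(hypergeometric-type) equation there (eqs. B.6–B.7). -/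
theorem frobenius_series_solution
    (s ℓ : ℤ) (hsl : |s| ≤ ℓ) (a : ℕ → ℝ) (ha0 : a 0 = 1)
    (harec : ∀ n : ℕ,
      a (n+1) = (((ℓ:ℝ)+(n:ℝ)+1)*((ℓ:ℝ)+(n:ℝ)+(s:ℝ)+1) /
        (((n:ℝ)+1)*(2*(ℓ:ℝ)+(n:ℝ)+2))) * a n) :
    (∀ x : ℝ, |x| < 1 → Summable (fun n : ℕ => a n * x ^ n)) ∧
    (∀ x : ℝ, 1 < |x| → ¬ Summable (fun n : ℕ => a n * x ^ n)) ∧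
    (∀ ρ ∈ Set.Ioi (1:ℝ), Summable (fun n : ℕ => a n * ρ ^ (-(ℓ - s) - (n:ℤ)))) ∧
    (∀ ρ ∈ Set.Ioi (1:ℝ), DifferentiableAt ℝ (frobeniusSol s ℓ a) ρ ∧
      DifferentiableAt ℝ (deriv (frobeniusSol s ℓ a)) ρ) ∧
    (∀ ρ ∈ Set.Ioi (1:ℝ),
      deriv (deriv (frobeniusSol s ℓ a)) ρ +
        (-(3*(s:ℝ)+1)/ρ + (1+(s:ℝ))/(ρ-1)) * deriv (frobeniusSol s ℓ a) ρ +
        (((s:ℝ)+1)*(2*(s:ℝ)+1)/ρ^2 -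
          (((s:ℝ)+1)^2 + (ℓ:ℝ)*((ℓ:ℝ)+1))/(ρ*(ρ-1))) * frobeniusSol s ℓ a ρ
        = 0) := by
  have harec' : ∀ n : ℕ, a (n+1) = R s ℓ n * a n := fun n => by rw [harec n, R]
  -- the first-derivative function
  set G : ℝ → ℝ := fun z =>
    ∑' n : ℕ, a n * (((-(ℓ-s) - (n:ℤ) : ℤ):ℝ) * z ^ (-(ℓ-s) - (n:ℤ) - 1)) with hG_def
  have hderiv1 : ∀ ρ : ℝ, 1 < ρ → deriv (frobeniusSol s ℓ a) ρ = G ρ := by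
    intro ρ hρ
    exact (hasDeriv_one hsl ha0 harec' hρ).deriv
  have hEqOn : ∀ ρ : ℝ, 1 < ρ → deriv (frobeniusSol s ℓ a) =ᶠ[𝓝 ρ] G := by
    intro ρ hρ
    exact Filter.eventuallyEq_of_mem (isOpen_Ioi.mem_nhds hρ) (fun z hz => hderiv1 z hz)
  refine ⟨fun x hx => part1 hsl ha0 harec' hx,
    fun x hx => part2 hsl ha0 harec' hx,
    fun ρ hρ => sum_plain hsl ha0 harec' hρ,
    fun ρ hρ => ⟨(hasDeriv_one hsl ha0 harec' hρ).differentiableAt, ?_⟩,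
    fun ρ hρ => ?_⟩
  · exact ((hEqOn ρ hρ).differentiableAt_iff).mpr
      (hasDeriv_two hsl ha0 harec' hρ).differentiableAt
  · have hdd : deriv (deriv (frobeniusSol s ℓ a)) ρ =
        ∑' n : ℕ, (a n * ((-(ℓ-s) - (n:ℤ) : ℤ):ℝ)) *
          (((-(ℓ-s) - (n:ℤ) - 1 : ℤ):ℝ) * ρ ^ (-(ℓ-s) - (n:ℤ) - 2)) :=
      ((hEqOn ρ hρ).deriv_eq).trans (hasDeriv_two hsl ha0 harec' hρ).deriv
    rw [hdd, hderiv1 ρ hρ, hG_def]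
    exact ode_holds hsl ha0 harec' hρ
end
end
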